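/- For every real ε > 0, every integer d ≥ 3, and every natural number n with (n : ℝ) ≥ 2^(32·d/ε²), one has C(⌊log₂ n⌋ + d − 3, ⌊log₂ n⌋) ≤ n^ε (as real numbers). -/

import Mathlib

open Real Finset

private lemma entropy_nat (a b : ℕ) :
    (a + b).choose a * a ^ a * b ^ b ≤ (a + b) ^ (a + b) := by
  rw [add_pow]
  have ha : a ∈ Finset.range (a + b + 1) := by simp
  calc (a + b).choose a * a ^ a * b ^ b
      = a ^ a * b ^ (a + b - a) * (a + b).choose a := by
        rw [Nat.add_sub_cancel_left]; ring
    _ ≤ ∑ i ∈ Finset.range (a + b + 1), a ^ i * b ^ (a + b - i) * (a + b).choose i :=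
        Finset.single_le_sum (f := fun i => a ^ i * b ^ (a + b - i) * (a + b).choose i)
          (fun i _ => Nat.zero_le _) ha

private lemma choose_le_exp (a b : ℕ) (ha : 0 < a) (hb : 0 < b) :
    ((a + b).choose b : ℝ) ≤ Real.exp (b + b * Real.log (((a : ℝ) + b) / b)) := by
  have hA : (0:ℝ) < a := by exact_mod_cast ha
  have hB : (0:ℝ) < b := by exact_mod_cast hb
  have hent := entropy_nat b a
  rw [Nat.add_comm b a] at hent
  have hent' : ((a + b).choose b : ℝ) * ((b:ℝ) ^ b * (a:ℝ) ^ a) ≤ ((a:ℝ) + b) ^ (a + b) := by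
    have : (((a + b).choose b * b ^ b * a ^ a : ℕ) : ℝ) ≤ (((a + b) ^ (a + b) : ℕ) : ℝ) := by
      exact_mod_cast hent
    push_cast at this
    nlinarith [this]
  have key : ((a + b).choose b : ℝ) ≤ (((a:ℝ) + b) / a) ^ a * (((a:ℝ) + b) / b) ^ b := by
    rw [div_pow, div_pow, div_mul_div_comm, ← pow_add]
    rw [le_div_iff₀ (by positivity)]
    calc ((a + b).choose b : ℝ) * ((a:ℝ) ^ a * (b:ℝ) ^ b)
        = ((a + b).choose b : ℝ) * ((b:ℝ) ^ b * (a:ℝ) ^ a) := by ring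
      _ ≤ ((a:ℝ) + b) ^ (a + b) := hent'
  have h1 : (((a:ℝ) + b) / a) ^ a ≤ Real.exp b := by
    have heq : ((a:ℝ) + b) / a = (b:ℝ)/a + 1 := by field_simp; ring
    rw [heq]
    calc ((b:ℝ)/a + 1) ^ a ≤ Real.exp ((b:ℝ)/a) ^ a :=
          pow_le_pow_left₀ (by positivity) (Real.add_one_le_exp _) a
      _ = Real.exp ((a:ℝ) * ((b:ℝ)/a)) := (Real.exp_nat_mul _ a).symm
      _ = Real.exp b := by congr 1; field_simp
  have h2 : (((a:ℝ) + b) / b) ^ b = Real.exp ((b:ℝ) * Real.log (((a:ℝ) + b) / b)) := by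
    rw [Real.exp_nat_mul, Real.exp_log (by positivity)]
  rw [Real.exp_add, ← h2]
  calc ((a + b).choose b : ℝ) ≤ (((a:ℝ) + b) / a) ^ a * (((a:ℝ) + b) / b) ^ b := key
    _ ≤ Real.exp b * (((a:ℝ) + b) / b) ^ b := by
        apply mul_le_mul_of_nonneg_right h1 (by positivity)

set_option maxHeartbeats 1600000 in
private lemma key_exp (ε : ℝ) (hε : 0 < ε) (L k : ℕ) (hL : 0 < L) (hk : 0 < k)
    (hcon : 32 * ((k:ℝ) + 3) ≤ ε ^ 2 * ((L:ℝ) + 1)) :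
    ((L + k).choose L : ℝ) ≤ Real.exp (ε * L * Real.log 2) := by
  have hLr : (1:ℝ) ≤ L := by exact_mod_cast hL
  have hkr : (1:ℝ) ≤ k := by exact_mod_cast hk
  have hk16 : (k:ℝ) ≤ ε ^ 2 * L / 16 := by nlinarith [sq_nonneg ε]
  have l2 : (0.6931:ℝ) < Real.log 2 := lt_trans (by norm_num) Real.log_two_gt_d9
  rcases le_or_gt ε 4 with h4 | h4
  · -- small ε case
    rw [Nat.choose_symm_add]
    refine (choose_le_exp L k hL hk).trans (Real.exp_le_exp.mpr ?_)
    set x : ℝ := ((L:ℝ) + k) / k with hxdef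
    have hxpos : 0 < x := by positivity
    have hxk : (k:ℝ) * x = (L:ℝ) + k := by rw [hxdef]; field_simp
    have hlogε : -Real.log ε ≤ 1/ε - 1 := by
      have h := Real.log_le_sub_one_of_pos (show (0:ℝ) < ε⁻¹ by positivity)
      rw [Real.log_inv] at h
      simpa [one_div] using h
    have hcoef : 0 ≤ 3 * Real.log 2 - Real.log ε := by
      have h1 : Real.log ε ≤ Real.log 4 := Real.log_le_log hε h4
      have h2 : Real.log 4 = 2 * Real.log 2 := by
        rw [show (4:ℝ) = 2^2 by norm_num, Real.log_pow]; norm_num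
      nlinarith
    have hlogx : Real.log x ≤ (3 * Real.log 2 - Real.log ε) + (ε * x / 8 - 1) := by
      have h8 : Real.log x = Real.log (8/ε) + Real.log (ε * x / 8) := by
        rw [← Real.log_mul (by positivity) (by positivity)]
        congr 1; field_simp
      have h9 := Real.log_le_sub_one_of_pos (show (0:ℝ) < ε * x / 8 by positivity)
      have h8e : Real.log (8/ε) = 3 * Real.log 2 - Real.log ε := by
        rw [Real.log_div (by norm_num) (ne_of_gt hε)]
        rw [show (8:ℝ) = 2^3 by norm_num, Real.log_pow]; norm_num
      rw [h8, h8e]; linarith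
    have hlek : (k:ℝ) * Real.log x
        ≤ (k:ℝ) * (3 * Real.log 2 - Real.log ε) + (ε * ((L:ℝ) + k) / 8 - k) := by
      have h := mul_le_mul_of_nonneg_left hlogx (by positivity : (0:ℝ) ≤ k)
      have hexpand : (k:ℝ) * ((3 * Real.log 2 - Real.log ε) + (ε * x / 8 - 1))
          = (k:ℝ) * (3 * Real.log 2 - Real.log ε) + (ε * ((L:ℝ) + k) / 8 - k) := by
        rw [← hxk]; ring
      linarith [h, hexpand]
    have t1 : (k:ℝ) * (3 * Real.log 2 - Real.log ε)
        ≤ ε^2 * L / 16 * (3 * Real.log 2) + (ε * L / 16 - ε^2 * L / 16) := by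
      calc (k:ℝ) * (3 * Real.log 2 - Real.log ε)
          ≤ (ε^2 * L / 16) * (3 * Real.log 2 - Real.log ε) :=
            mul_le_mul_of_nonneg_right hk16 hcoef
        _ ≤ (ε^2 * L / 16) * (3 * Real.log 2 + (1/ε - 1)) := by
            apply mul_le_mul_of_nonneg_left (by linarith) (by positivity)
        _ = ε^2 * L / 16 * (3 * Real.log 2) + (ε * L / 16 - ε^2 * L / 16) := by
            field_simp
    have t2 : ε * (k:ℝ) ≤ ε^3 * L / 16 := by
      nlinarith [mul_le_mul_of_nonneg_left hk16 hε.le]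
    have scalar : 24 * ε * Real.log 2 + 24 - 8 * ε + ε^2 ≤ 128 * Real.log 2 := by
      nlinarith [mul_nonneg hε.le (sub_nonneg.mpr h4), sq_nonneg ε]
    have hscaled := mul_le_mul_of_nonneg_right scalar
      (show (0:ℝ) ≤ ε * L / 128 by positivity)
    nlinarith [hlek, t1, t2, hscaled]
  · rcases le_or_gt k L with hkL | hkL
    · -- k ≤ L, ε > 4
      rw [Nat.choose_symm_add]
      refine (choose_le_exp L k hL hk).trans (Real.exp_le_exp.mpr ?_)
      have hkLr : (k:ℝ) ≤ L := by exact_mod_cast hkL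
      have hlog : Real.log (((L:ℝ) + k) / k) ≤ ((L:ℝ) + k) / k - 1 :=
        Real.log_le_sub_one_of_pos (by positivity)
      have hmul : (k:ℝ) * Real.log (((L:ℝ) + k) / k) ≤ (L:ℝ) := by
        have h := mul_le_mul_of_nonneg_left hlog (by positivity : (0:ℝ) ≤ k)
        have : (k:ℝ) * (((L:ℝ) + k) / k - 1) = (L:ℝ) := by field_simp; ring
        linarith [h, this]
      have hstep : (k:ℝ) + (k:ℝ) * Real.log (((L:ℝ) + k) / k) ≤ 2 * L := by
        linarith [hmul, hkLr]
      have h2 : (2:ℝ) ≤ ε * Real.log 2 := by nlinarith [l2, h4]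
      have h3 : 2 * (L:ℝ) ≤ (ε * Real.log 2) * L :=
        mul_le_mul_of_nonneg_right h2 (by positivity)
      nlinarith [hstep, h3]
    · -- k > L, ε > 4
      rw [show L + k = k + L by omega]
      refine (choose_le_exp k L hk hL).trans (Real.exp_le_exp.mpr ?_)
      set s : ℝ := (k:ℝ) / L with hsdef
      have hLpos : (0:ℝ) < L := by linarith
      have hs1 : 1 < s := by
        rw [hsdef, lt_div_iff₀ hLpos]
        simp only [one_mul]
        exact_mod_cast hkL
      have hs2 : s ≤ ε^2 / 16 := by
        rw [hsdef, div_le_iff₀ hLpos]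
        nlinarith [hk16]
      have hsq : Real.sqrt s ≤ ε / 4 := by
        have h := Real.sqrt_le_sqrt hs2
        rwa [show ε^2/16 = (ε/4)^2 by ring, Real.sqrt_sq (by positivity)] at h
      have hlogs : Real.log s ≤ 2 * (Real.sqrt s - 1) := by
        have h := Real.log_le_sub_one_of_pos (show (0:ℝ) < Real.sqrt s by
          positivity)
        have h2 : Real.log (Real.sqrt s) = Real.log s / 2 :=
          Real.log_sqrt (by positivity)
        linarith [h, h2]
      have harg : ((k:ℝ) + L) / L = s + 1 := by rw [hsdef]; field_simp
      have hlog : Real.log (((k:ℝ) + L) / L) ≤ Real.log 2 + (ε / 2 - 2) := by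
        rw [harg]
        have hle : s + 1 ≤ 2 * s := by linarith
        have h1 : Real.log (s + 1) ≤ Real.log (2 * s) :=
          Real.log_le_log (by linarith) hle
        rw [Real.log_mul (by norm_num) (by positivity)] at h1
        linarith [hlogs, hsq]
      have hfinal : (L:ℝ) * Real.log (((k:ℝ) + L) / L) ≤ (L:ℝ) * (Real.log 2 + (ε/2 - 2)) :=
        mul_le_mul_of_nonneg_left hlog hLpos.le
      nlinarith [hfinal, l2, mul_le_mul_of_nonneg_left (show (4:ℝ) < ε from h4).le hLpos.le]

theorem binomial_near_boundary_small (ε : ℝ) (hε : 0 < ε) (d n : ℕ)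
    (hd : 3 ≤ d) (hn : (n : ℝ) ≥ 2 ^ (32 * (d : ℝ) / ε ^ 2)) :
    (Nat.choose (Nat.log 2 n + d - 3) (Nat.log 2 n) : ℝ) ≤ (n : ℝ) ^ ε := by
  set L := Nat.log 2 n with hLdef
  have hεs : (0:ℝ) < ε ^ 2 := by positivity
  have hdpos : (0:ℝ) < d := by exact_mod_cast (by omega : 0 < d)
  have hn1 : (1:ℝ) < n := by
    have h1 : (1:ℝ) < 2 ^ (32 * (d : ℝ) / ε ^ 2) := by
      rw [show (1:ℝ) = (2:ℝ) ^ (0:ℝ) by simp]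
      apply Real.rpow_lt_rpow_left_iff (by norm_num : (1:ℝ) < 2) |>.mpr
      positivity
    linarith [hn]
  have hn2 : 2 ≤ n := by
    have : 1 < n := by exact_mod_cast hn1
    omega
  have hL1 : 0 < L := Nat.log_pos (by norm_num) hn2
  have hup : (n:ℝ) < 2 ^ (((L:ℝ) + 1)) := by
    have h := Nat.lt_pow_succ_log_self (show 1 < 2 by norm_num) n
    have h2 : (n:ℝ) < (2:ℝ) ^ (L + 1 : ℕ) := by exact_mod_cast h
    rwa [← Real.rpow_natCast 2 (L+1), Nat.cast_add, Nat.cast_one] at h2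
  have hcon0 : 32 * (d:ℝ) / ε ^ 2 < (L:ℝ) + 1 :=
    (Real.rpow_lt_rpow_left_iff (by norm_num : (1:ℝ) < 2)).mp (lt_of_le_of_lt hn hup)
  have hcon : 32 * (d:ℝ) ≤ ε ^ 2 * ((L:ℝ) + 1) := by
    rw [div_lt_iff₀ hεs] at hcon0
    nlinarith [hcon0]
  set k := d - 3 with hkdef
  have harg : L + d - 3 = L + k := by omega
  rw [harg]
  have hnpos : (0:ℝ) < n := by linarith
  have hexp_le : Real.exp (ε * L * Real.log 2) ≤ (n:ℝ) ^ ε := by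
    rw [Real.rpow_def_of_pos hnpos]
    apply Real.exp_le_exp.mpr
    have h2L : ((2:ℝ)) ^ (L:ℕ) ≤ n := by
      exact_mod_cast Nat.pow_log_le_self 2 (by omega : n ≠ 0)
    have hlog : (L:ℝ) * Real.log 2 ≤ Real.log n := by
      rw [← Real.log_pow]
      exact Real.log_le_log (by positivity) h2L
    nlinarith [mul_le_mul_of_nonneg_left hlog hε.le]
  rcases Nat.eq_zero_or_pos k with hk0 | hkpos
  · rw [hk0]
    simp only [Nat.add_zero, Nat.choose_self, Nat.cast_one]
    calc (1:ℝ) = (1:ℝ) ^ ε := (Real.one_rpow ε).symm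
      _ ≤ (n:ℝ) ^ ε := Real.rpow_le_rpow (by norm_num) (by linarith) hε.le
  · have hcon' : 32 * ((k:ℝ) + 3) ≤ ε ^ 2 * ((L:ℝ) + 1) := by
      have hdk : (d:ℝ) = (k:ℝ) + 3 := by
        rw [hkdef]
        push_cast [Nat.cast_sub hd]
        ring
      linarith [hcon]
    exact le_trans (key_exp ε hε L k hL1 hkpos hcon') hexp_le
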